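/- Fix an integer n ≥ 1. Let Ω ⊂ ℝⁿ be a bounded connected open set with C² boundary, let δ > 0, and let φ : ℝⁿ ∖ Ω → ℝ be continuous with compact support satisfying φ ≥ 0 and supp φ ⊂ {x ∈ ℝⁿ : dist(x,Ω) ≥ δ}. Then there exists s̃ ∈ (0,1) such that, for every s ∈ (0, s̃), every s-minimal function u_s in Ω with u_s = φ a.e. in ℝⁿ ∖ Ω satisfies u_s = 0 a.e. in Ω. -/

import Mathlib

open MeasureTheory Filter
open scoped ENNReal NNReal

noncomputable section

/-- The fractional kernel `|x - y| ^ (-n - s)`. -/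
def fracKernel (n : ℕ) (s : ℝ) (x y : EuclideanSpace ℝ (Fin n)) : ℝ :=
  dist x y ^ (-(n : ℝ) - s)

/-- The cross-shaped domain `Q(Ω) = (ℝⁿ × ℝⁿ) \ (𝒞Ω × 𝒞Ω)`. -/
def crossQ (n : ℕ) (Ω : Set (EuclideanSpace ℝ (Fin n))) :
    Set (EuclideanSpace ℝ (Fin n) × EuclideanSpace ℝ (Fin n)) :=
  (Ωᶜ ×ˢ Ωᶜ)ᶜ

/-- Membership in `𝒲^{s,1}(Ω)`: a measurable function with finite Gagliardo
`W^{s,1}`-seminorm in `Ω`. -/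
def MemW (n : ℕ) (s : ℝ) (Ω : Set (EuclideanSpace ℝ (Fin n)))
    (u : EuclideanSpace ℝ (Fin n) → ℝ) : Prop :=
  Measurable u ∧
    ∫⁻ p in Ω ×ˢ Ω, ENNReal.ofReal (|u p.1 - u p.2| * fracKernel n s p.1 p.2) < ⊤

/-- `u` is an `s`-minimal function in `Ω`: for every competitor `v ∈ 𝒲^{s,1}(Ω)` that
agrees with `u` a.e. in `𝒞Ω`, the comparison integrand is integrable on `Q(Ω)` and its
integral is nonpositive. -/
def SMinimal (n : ℕ) (s : ℝ) (Ω : Set (EuclideanSpace ℝ (Fin n)))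
    (u : EuclideanSpace ℝ (Fin n) → ℝ) : Prop :=
  MemW n s Ω u ∧
    ∀ v : EuclideanSpace ℝ (Fin n) → ℝ, MemW n s Ω v →
      (∀ᵐ x ∂(volume.restrict Ωᶜ), v x = u x) →
      IntegrableOn
        (fun p => (|u p.1 - u p.2| - |v p.1 - v p.2|) * fracKernel n s p.1 p.2)
        (crossQ n Ω) volume ∧
      ∫ p in crossQ n Ω, (|u p.1 - u p.2| - |v p.1 - v p.2|) * fracKernel n s p.1 p.2 ≤ 0

/-- `Ω` has a boundary which is locally, up to a rigid motion of `ℝⁿ`, the open region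
strictly above the graph of a function `ℝ^{n-1} → ℝ` satisfying the property `P`. -/
def HasGraphBoundary (n : ℕ) (hn : 0 < n)
    (P : (EuclideanSpace ℝ (Fin (n - 1)) → ℝ) → Prop)
    (Ω : Set (EuclideanSpace ℝ (Fin n))) : Prop :=
  ∀ x ∈ frontier Ω, ∃ U : Set (EuclideanSpace ℝ (Fin n)), IsOpen U ∧ x ∈ U ∧
    ∃ σ : EuclideanSpace ℝ (Fin n) ≃ᵢ EuclideanSpace ℝ (Fin n),
    ∃ f : EuclideanSpace ℝ (Fin (n - 1)) → ℝ, P f ∧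
      ∀ y ∈ U, (y ∈ Ω ↔
        f (WithLp.toLp 2 (fun i => σ y (Fin.castLE (Nat.sub_le n 1) i))) < σ y ⟨n - 1, Nat.sub_lt hn Nat.one_pos⟩)

/-- `Ω` has boundary of class `C²`. -/
def HasC2Boundary (n : ℕ) (hn : 0 < n) (Ω : Set (EuclideanSpace ℝ (Fin n))) : Prop :=
  HasGraphBoundary n hn (fun f => ContDiff ℝ 2 f) Ω

lemma fk_nonneg (n : ℕ) (s : ℝ) (x y : EuclideanSpace ℝ (Fin n)) :
    0 ≤ fracKernel n s x y := Real.rpow_nonneg dist_nonneg _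

lemma fk_symm (n : ℕ) (s : ℝ) (x y : EuclideanSpace ℝ (Fin n)) :
    fracKernel n s x y = fracKernel n s y x := by
  unfold fracKernel; rw [dist_comm]

lemma fk_meas (n : ℕ) (s : ℝ) :
    Measurable fun p : (EuclideanSpace ℝ (Fin n)) × (EuclideanSpace ℝ (Fin n)) =>
      fracKernel n s p.1 p.2 :=
  (measurable_fst.dist measurable_snd).pow measurable_const

lemma fk_meas_right (n : ℕ) (s : ℝ) (x : EuclideanSpace ℝ (Fin n)) :
    Measurable fun y : EuclideanSpace ℝ (Fin n) => fracKernel n s x y :=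
  (measurable_const.dist measurable_id).pow measurable_const

lemma fk_le (n : ℕ) {s δ : ℝ} (hs : 0 < s) (hs1 : s ≤ 1) (hδ : 0 < δ)
    {x y : EuclideanSpace ℝ (Fin n)} (h : δ ≤ dist x y) :
    fracKernel n s x y ≤ (max δ⁻¹ 1) ^ (n + 1) := by
  have h1 : fracKernel n s x y ≤ δ ^ (-(n : ℝ) - s) :=
    Real.rpow_le_rpow_of_nonpos hδ h
      (by have : (0:ℝ) ≤ n := Nat.cast_nonneg n; linarith)
  have h2 : δ ^ (-(n : ℝ) - s) = (δ⁻¹) ^ ((n : ℝ) + s) := by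
    rw [Real.inv_rpow hδ.le, ← Real.rpow_neg hδ.le]
    ring_nf
  have h3 : (δ⁻¹) ^ ((n : ℝ) + s) ≤ (max δ⁻¹ 1) ^ ((n : ℝ) + s) :=
    Real.rpow_le_rpow (by positivity) (le_max_left _ _) (by positivity)
  have h4 : (max δ⁻¹ 1) ^ ((n : ℝ) + s) ≤ (max δ⁻¹ 1) ^ ((n : ℝ) + 1) :=
    Real.rpow_le_rpow_of_exponent_le (le_max_right _ _) (by linarith)
  have h5 : (max δ⁻¹ 1 : ℝ) ^ ((n : ℝ) + 1) = (max δ⁻¹ 1) ^ (n + 1) := by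
    rw [← Real.rpow_natCast (max δ⁻¹ 1) (n + 1)]
    push_cast
    ring_nf
  linarith [h1, h2 ▸ h1, h3, h4, h5 ▸ h4]

lemma key_real (n k : ℕ) {s R : ℝ} (hs : 0 < s) (hk1s : ((k : ℝ) + 1) * s ≤ 1) (hR : 0 < R) :
    min 1 R⁻¹ / 2 ^ (n + 2) ≤ (2 ^ (k + 1) * R) ^ (-(n : ℝ) - s) * (2 ^ k * R) ^ n := by
  have ht : (0:ℝ) < 2 ^ k * R := by positivity
  have h2t : (2:ℝ) ^ (k+1) * R = 2 * (2 ^ k * R) := by ring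
  have hs1 : s ≤ 1 := by nlinarith [hk1s, hs, (by positivity : (0:ℝ) ≤ (k:ℝ) * s)]
  set t := (2:ℝ) ^ k * R with htdef
  -- split the rpow
  have hsplit : (2 * t) ^ (-(n : ℝ) - s) = ((2 * t) ^ n)⁻¹ * (2 * t) ^ (-s) := by
    have : (-(n : ℝ) - s) = (-(n:ℝ)) + (-s) := by ring
    rw [this, Real.rpow_add (by positivity), Real.rpow_neg (by positivity),
      Real.rpow_natCast]
  -- (2t)^(-s) ≥ (1/2) * min 1 R⁻¹
  have hpow1 : (2:ℝ)⁻¹ ≤ ((2:ℝ) ^ (k+1)) ^ (-s) := by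
    have : ((2:ℝ) ^ (k+1)) ^ (-s) = (2:ℝ) ^ (((k:ℝ)+1) * (-s)) := by
      rw [← Real.rpow_natCast 2 (k+1), ← Real.rpow_mul (by norm_num)]
      push_cast; ring_nf
    rw [this]
    calc (2:ℝ)⁻¹ = (2:ℝ) ^ (-1 : ℝ) := by
          rw [Real.rpow_neg_one]
      _ ≤ (2:ℝ) ^ (((k:ℝ)+1) * (-s)) := by
          apply Real.rpow_le_rpow_of_exponent_le one_le_two
          nlinarith
  have hpow2 : min 1 R⁻¹ ≤ R ^ (-s) := by
    rcases le_or_gt 1 R with hR1 | hR1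
    · calc min 1 R⁻¹ ≤ R⁻¹ := min_le_right _ _
        _ = R ^ (-1 : ℝ) := (Real.rpow_neg_one R).symm
        _ ≤ R ^ (-s) := Real.rpow_le_rpow_of_exponent_le hR1 (by linarith)
    · calc min 1 R⁻¹ ≤ 1 := min_le_left _ _
        _ = R ^ (0 : ℝ) := (Real.rpow_zero R).symm
        _ ≤ R ^ (-s) := Real.rpow_le_rpow_of_exponent_ge hR hR1.le (by linarith)
  have hmul : (2 * t) ^ (-s) = ((2:ℝ) ^ (k+1)) ^ (-s) * R ^ (-s) := by
    rw [← h2t, Real.mul_rpow (by positivity) hR.le]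
  have hmin0 : (0:ℝ) ≤ min 1 R⁻¹ := le_min zero_le_one (by positivity)
  have h2ts : (2:ℝ)⁻¹ * min 1 R⁻¹ ≤ (2 * t) ^ (-s) := by
    rw [hmul]
    have := mul_le_mul hpow1 hpow2 hmin0 (by positivity)
    linarith
  -- assemble
  have h2tn : ((2 * t) ^ n : ℝ) = 2 ^ n * t ^ n := by rw [mul_pow]
  have htn : (0:ℝ) < t ^ n := by positivity
  have goal' : (2 ^ (k + 1) * R) ^ (-(n : ℝ) - s) * (2 ^ k * R) ^ n
      = (2 * t) ^ (-s) * (2 ^ n : ℝ)⁻¹ := by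
    rw [h2t, hsplit, h2tn]
    field_simp
    ring
  rw [goal']
  have h2n : (0:ℝ) < (2:ℝ) ^ n := by positivity
  calc min 1 R⁻¹ / 2 ^ (n + 2) = (2:ℝ)⁻¹ * min 1 R⁻¹ * ((2:ℝ)^(n+1))⁻¹ := by
        have h22 : (2:ℝ)^(n+2) = 2 * 2^(n+1) := by ring
        rw [div_eq_mul_inv, h22, mul_inv]; ring
    _ ≤ (2 * t) ^ (-s) * ((2:ℝ)^(n+1))⁻¹ := by
        apply mul_le_mul_of_nonneg_right h2ts (by positivity)
    _ ≤ (2 * t) ^ (-s) * ((2:ℝ)^n)⁻¹ := by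
        apply mul_le_mul_of_nonneg_left _ (Real.rpow_nonneg (by positivity) _)
        apply inv_anti₀ h2n
        rw [pow_succ]; nlinarith

lemma annuli_lower (n : ℕ) (hn : 0 < n) (N : ℕ) {s R : ℝ}
    (hs : 0 < s) (hNs : (N : ℝ) * s ≤ 1) (hR : 0 < R) (x : EuclideanSpace ℝ (Fin n)) :
    (N : ℝ≥0∞) * (volume (Metric.ball (0 : EuclideanSpace ℝ (Fin n)) 1)
        * ENNReal.ofReal (min 1 R⁻¹ / 2 ^ (n + 2))) ≤
      ∫⁻ y in {y | R ≤ dist x y}, ENNReal.ofReal (fracKernel n s x y) := by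
  haveI : Nontrivial (EuclideanSpace ℝ (Fin n)) :=
    Module.nontrivial_of_finrank_pos (R := ℝ) (by rw [finrank_euclideanSpace_fin]; exact hn)
  set μB := volume (Metric.ball (0 : EuclideanSpace ℝ (Fin n)) 1) with hμB
  set A : ℕ → Set (EuclideanSpace ℝ (Fin n)) :=
    fun k => Metric.ball x (2 ^ (k+1) * R) \ Metric.ball x (2 ^ k * R) with hA
  have hAmeas : ∀ k, MeasurableSet (A k) :=
    fun k => measurableSet_ball.diff measurableSet_ball
  have hAdist : ∀ k y, y ∈ A k → 2 ^ k * R ≤ dist x y ∧ dist x y < 2 ^ (k+1) * R := by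
    intro k y hy
    rcases hy with ⟨h1, h2⟩
    rw [Metric.mem_ball, dist_comm] at h1
    rw [Metric.mem_ball, dist_comm] at h2
    exact ⟨not_lt.mp h2, h1⟩
  have hpowle : ∀ k : ℕ, (1:ℝ) ≤ 2 ^ k := fun k => one_le_pow₀ one_le_two
  have hsub : (⋃ k ∈ Finset.range N, A k) ⊆ {y | R ≤ dist x y} := by
    intro y hy
    simp only [Set.mem_iUnion] at hy
    obtain ⟨k, _, hk⟩ := hy
    have := (hAdist k y hk).1
    have h1 : R ≤ 2 ^ k * R := le_mul_of_one_le_left hR.le (hpowle k)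
    exact le_trans h1 this
  have hdisj : Set.PairwiseDisjoint ↑(Finset.range N) A := by
    have aux : ∀ i j : ℕ, i < j → Disjoint (A i) (A j) := by
      intro i j hij
      rw [Set.disjoint_left]
      intro y hyi hyj
      have h1 := (hAdist i y hyi).2
      have h2 := (hAdist j y hyj).1
      have : (2:ℝ) ^ (i+1) ≤ 2 ^ j := pow_le_pow_right₀ one_le_two hij
      nlinarith
    intro i _ j _ hij
    rcases lt_or_gt_of_ne hij with h | h
    · exact aux i j h
    · exact (aux j i h).symm
  have hannulus : ∀ k ∈ Finset.range N,
      μB * ENNReal.ofReal (min 1 R⁻¹ / 2 ^ (n + 2)) ≤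
        ∫⁻ y in A k, ENNReal.ofReal (fracKernel n s x y) := by
    intro k hk
    rw [Finset.mem_range] at hk
    -- volume lower bound
    have hball : ∀ r : ℝ, 0 ≤ r →
        volume (Metric.ball x r) = ENNReal.ofReal (r ^ n) * μB := by
      intro r hr
      rw [Measure.addHaar_ball volume x hr, finrank_euclideanSpace_fin]
    have hsubball : Metric.ball x (2 ^ k * R) ⊆ Metric.ball x (2 ^ (k+1) * R) := by
      apply Metric.ball_subset_ball
      have : (2:ℝ) ^ k ≤ 2 ^ (k+1) := pow_le_pow_right₀ one_le_two (Nat.le_succ k)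
      nlinarith
    have hvolA : volume (A k)
        = ENNReal.ofReal ((2 ^ (k+1) * R) ^ n) * μB
          - ENNReal.ofReal ((2 ^ k * R) ^ n) * μB := by
      rw [hA]
      rw [measure_diff hsubball measurableSet_ball.nullMeasurableSet
        measure_ball_lt_top.ne, hball _ (by positivity), hball _ (by positivity)]
    have hvol : ENNReal.ofReal ((2 ^ k * R) ^ n) * μB ≤ volume (A k) := by
      rw [hvolA]
      apply ENNReal.le_sub_of_add_le_right
        (by
          apply ENNReal.mul_ne_top ENNReal.ofReal_ne_top
          exact measure_ball_lt_top.ne)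
      rw [← add_mul, ← ENNReal.ofReal_add (by positivity) (by positivity)]
      apply mul_le_mul_left
      apply ENNReal.ofReal_le_ofReal
      have h2n : (2:ℝ) ≤ 2 ^ n := by
        calc (2:ℝ) = 2 ^ 1 := (pow_one 2).symm
        _ ≤ 2 ^ n := pow_le_pow_right₀ one_le_two hn
      have : ((2:ℝ) ^ (k+1) * R) ^ n = 2 ^ n * (2 ^ k * R) ^ n := by
        rw [← mul_pow]; ring_nf
      rw [this]
      nlinarith [pow_pos (by positivity : (0:ℝ) < 2 ^ k * R) n]
    -- kernel lower bound on A k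
    have hker : ∀ y ∈ A k, ENNReal.ofReal ((2 ^ (k+1) * R) ^ (-(n:ℝ) - s))
        ≤ ENNReal.ofReal (fracKernel n s x y) := by
      intro y hy
      apply ENNReal.ofReal_le_ofReal
      obtain ⟨h1, h2⟩ := hAdist k y hy
      have hdpos : 0 < dist x y := lt_of_lt_of_le (by positivity) h1
      exact Real.rpow_le_rpow_of_nonpos hdpos h2.le
        (by have : (0:ℝ) ≤ n := Nat.cast_nonneg n; linarith)
    calc μB * ENNReal.ofReal (min 1 R⁻¹ / 2 ^ (n + 2))
        ≤ μB * ENNReal.ofReal ((2 ^ (k+1) * R) ^ (-(n:ℝ) - s) * (2 ^ k * R) ^ n) := by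
          apply mul_le_mul_right
          apply ENNReal.ofReal_le_ofReal
          exact key_real n k hs (by
            have hk1 : ((k:ℝ) + 1) ≤ (N:ℝ) := by exact_mod_cast Nat.succ_le_of_lt hk
            nlinarith) hR
      _ = ENNReal.ofReal ((2 ^ (k+1) * R) ^ (-(n:ℝ) - s))
            * (ENNReal.ofReal ((2 ^ k * R) ^ n) * μB) := by
          rw [ENNReal.ofReal_mul (by positivity)]; ring
      _ ≤ ENNReal.ofReal ((2 ^ (k+1) * R) ^ (-(n:ℝ) - s)) * volume (A k) :=
          mul_le_mul_right hvol _
      _ = ∫⁻ _ in A k, ENNReal.ofReal ((2 ^ (k+1) * R) ^ (-(n:ℝ) - s)) :=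
          (setLIntegral_const _ _).symm
      _ ≤ ∫⁻ y in A k, ENNReal.ofReal (fracKernel n s x y) := by
          apply lintegral_mono_ae
          filter_upwards [ae_restrict_mem (hAmeas k)] with y hy
          exact hker y hy
  calc (N : ℝ≥0∞) * (μB * ENNReal.ofReal (min 1 R⁻¹ / 2 ^ (n + 2)))
      = ∑ _k ∈ Finset.range N, μB * ENNReal.ofReal (min 1 R⁻¹ / 2 ^ (n + 2)) := by
        rw [Finset.sum_const, Finset.card_range, nsmul_eq_mul]
    _ ≤ ∑ k ∈ Finset.range N, ∫⁻ y in A k, ENNReal.ofReal (fracKernel n s x y) :=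
        Finset.sum_le_sum hannulus
    _ = ∫⁻ y in ⋃ k ∈ Finset.range N, A k, ENNReal.ofReal (fracKernel n s x y) :=
        (lintegral_biUnion_finset hdisj (fun k _ => hAmeas k) _).symm
    _ ≤ ∫⁻ y in {y | R ≤ dist x y}, ENNReal.ofReal (fracKernel n s x y) :=
        lintegral_mono_set hsub

lemma fk_meas_left (n : ℕ) (s : ℝ) (y : EuclideanSpace ℝ (Fin n)) :
    Measurable fun x : EuclideanSpace ℝ (Fin n) => fracKernel n s x y :=
  (measurable_id.dist measurable_const).pow measurable_const

set_option maxHeartbeats 2000000 in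
theorem sMinimal_vanishes_for_small_s (n : ℕ) (hn : 0 < n)
    (Ω : Set (EuclideanSpace ℝ (Fin n))) (hΩo : IsOpen Ω) (hΩb : Bornology.IsBounded Ω)
    (hΩc : IsConnected Ω) (hΩ2 : HasC2Boundary n hn Ω)
    (δ : ℝ) (hδ : 0 < δ)
    (φ : EuclideanSpace ℝ (Fin n) → ℝ) (hφc : Continuous φ) (hφs : HasCompactSupport φ)
    (hφ0 : ∀ x, 0 ≤ φ x)
    (hsupp : tsupport φ ⊆ {x | δ ≤ Metric.infDist x Ω}) :
    ∃ sSmall : ℝ, sSmall ∈ Set.Ioo (0 : ℝ) 1 ∧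
      ∀ s ∈ Set.Ioo (0 : ℝ) sSmall,
        ∀ u : EuclideanSpace ℝ (Fin n) → ℝ, SMinimal n s Ω u →
          (∀ᵐ x ∂(volume.restrict Ωᶜ), u x = φ x) →
          ∀ᵐ x ∂(volume.restrict Ω), u x = 0 := by
  classical
  have mΩ : MeasurableSet Ω := hΩo.measurableSet
  set S : Set (EuclideanSpace ℝ (Fin n)) := tsupport φ with hSdef
  have hScl : IsClosed S := isClosed_tsupport φ
  have mS : MeasurableSet S := hScl.measurableSet
  have hScomp : IsCompact S := hφs
  have hSΩ : ∀ y ∈ S, δ ≤ Metric.infDist y Ω := fun y hy => hsupp hy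
  have hSsubΩc : S ⊆ Ωᶜ := by
    intro y hy hyΩ
    have h1 := hSΩ y hy
    rw [Metric.infDist_zero_of_mem hyΩ] at h1
    linarith
  obtain ⟨R₁, hR₁pos, hR₁⟩ := (hΩb.union hScomp.isBounded).subset_ball_lt 0 0
  have hΩball : Ω ⊆ Metric.ball 0 R₁ := (Set.union_subset_iff.mp hR₁).1
  have hSball : S ⊆ Metric.ball 0 R₁ := (Set.union_subset_iff.mp hR₁).2
  set R₂ : ℝ := 2 * R₁ with hR₂def
  have hR₂pos : 0 < R₂ := by positivity
  set μB := volume (Metric.ball (0 : EuclideanSpace ℝ (Fin n)) 1) with hμBdef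
  set c₂ : ℝ≥0∞ := μB * ENNReal.ofReal (min 1 R₂⁻¹ / 2 ^ (n + 2)) with hc₂def
  have hc₂0 : c₂ ≠ 0 := by
    apply mul_ne_zero
    · exact (Metric.measure_ball_pos volume 0 one_pos).ne'
    · exact (ENNReal.ofReal_pos.mpr (by positivity)).ne'
  have hc₂top : c₂ ≠ ⊤ := ENNReal.mul_ne_top measure_ball_lt_top.ne ENNReal.ofReal_ne_top
  set Mδ : ℝ := (max δ⁻¹ 1) ^ (n + 1) with hMδdef
  set γstar : ℝ≥0∞ := ENNReal.ofReal Mδ * volume S with hγdef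
  have hγtop : γstar ≠ ⊤ := ENNReal.mul_ne_top ENNReal.ofReal_ne_top hScomp.measure_lt_top.ne
  obtain ⟨N, hN⟩ := ENNReal.exists_nat_gt (r := γstar / c₂) (ENNReal.div_lt_top hγtop hc₂0).ne
  have hγN : γstar < N * c₂ := by
    rwa [ENNReal.div_lt_iff (Or.inl hc₂0) (Or.inl hc₂top)] at hN
  have hN0 : N ≠ 0 := by
    rintro rfl
    simp only [Nat.cast_zero, zero_mul] at hγN
    exact (not_lt_of_ge (zero_le : (0:ℝ≥0∞) ≤ γstar)) hγN
  refine ⟨min (1/(N+1:ℝ)) 2⁻¹, ⟨by positivity, lt_of_le_of_lt (min_le_right _ _) (by norm_num)⟩, ?_⟩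
  intro s hsmem u hmin hu
  obtain ⟨hs0, hss⟩ := hsmem
  have hs1 : s ≤ 1 :=
    le_of_lt (lt_of_lt_of_le hss (le_trans (min_le_right _ _) (by norm_num)))
  have hsN : (N:ℝ) * s ≤ 1 := by
    have h1 : s < 1/(N+1:ℝ) := lt_of_lt_of_le hss (min_le_left _ _)
    have hN1 : (0:ℝ) < (N:ℝ)+1 := by positivity
    have h2 : ((N:ℝ)+1) * s < 1 := by
      rw [div_eq_mul_inv, one_mul] at h1
      calc ((N:ℝ)+1) * s < ((N:ℝ)+1) * ((N:ℝ)+1)⁻¹ := by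
            apply mul_lt_mul_of_pos_left h1 hN1
        _ = 1 := mul_inv_cancel₀ hN1.ne'
    nlinarith
  have hum : Measurable u := hmin.1.1
  have hφm : Measurable φ := hφc.measurable
  -- the competitor
  set v : EuclideanSpace ℝ (Fin n) → ℝ := fun x => if x ∈ Ω then 0 else u x with hv
  have hvm : Measurable v := Measurable.ite mΩ measurable_const hum
  have hvW : MemW n s Ω v := by
    refine ⟨hvm, ?_⟩
    have h0 : ∫⁻ p in Ω ×ˢ Ω, ENNReal.ofReal (|v p.1 - v p.2| * fracKernel n s p.1 p.2)
        = ∫⁻ _p in Ω ×ˢ Ω, (0:ℝ≥0∞) := by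
      apply setLIntegral_congr_fun (mΩ.prod mΩ)
      intro p hp
      have h1 : v p.1 = 0 := if_pos hp.1
      have h2 : v p.2 = 0 := if_pos hp.2
      simp [h1, h2]
    rw [h0, lintegral_zero]
    exact ENNReal.zero_lt_top
  have hvu : ∀ᵐ x ∂(volume.restrict Ωᶜ), v x = u x := by
    filter_upwards [ae_restrict_mem mΩ.compl] with x hx
    exact if_neg hx
  obtain ⟨hFint, hFle⟩ := hmin.2 v hvW hvu
  set F : EuclideanSpace ℝ (Fin n) × EuclideanSpace ℝ (Fin n) → ℝ :=
    fun p => (|u p.1 - u p.2| - |v p.1 - v p.2|) * fracKernel n s p.1 p.2 with hFdef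
  set T : Set (EuclideanSpace ℝ (Fin n)) := Ωᶜ \ S with hTdef
  have mT : MeasurableSet T := mΩ.compl.diff mS
  have hTS : T ∪ S = Ωᶜ := Set.diff_union_of_subset hSsubΩc
  have hmemQ : ∀ p : EuclideanSpace ℝ (Fin n) × EuclideanSpace ℝ (Fin n),
      p ∈ crossQ n Ω ↔ (p.1 ∈ Ω ∨ p.2 ∈ Ω) := by
    intro p
    simp only [crossQ, Set.mem_compl_iff, Set.mem_prod, not_and_or, not_not]
  -- integrability pieces
  have hIΩΩ : IntegrableOn F (Ω ×ˢ Ω) volume :=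
    hFint.mono_set (fun p hp => (hmemQ p).mpr (Or.inl hp.1))
  have hIΩT : IntegrableOn F (Ω ×ˢ T) volume :=
    hFint.mono_set (fun p hp => (hmemQ p).mpr (Or.inl hp.1))
  have hIΩS : IntegrableOn F (Ω ×ˢ S) volume :=
    hFint.mono_set (fun p hp => (hmemQ p).mpr (Or.inl hp.1))
  have hITΩ : IntegrableOn F (T ×ˢ Ω) volume :=
    hFint.mono_set (fun p hp => (hmemQ p).mpr (Or.inr hp.2))
  have hISΩ : IntegrableOn F (S ×ˢ Ω) volume :=
    hFint.mono_set (fun p hp => (hmemQ p).mpr (Or.inr hp.2))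
  -- transfer of boundary data to products
  have hprodae2 : ∀ (W : Set (EuclideanSpace ℝ (Fin n))), MeasurableSet W → W ⊆ Ωᶜ →
      ∀ᵐ p ∂(volume.restrict (Ω ×ˢ W)), u p.2 = φ p.2 := by
    intro W mW hWsub
    have huW : ∀ᵐ x ∂(volume.restrict W), u x = φ x :=
      ae_restrict_of_ae_restrict_of_subset hWsub hu
    have hB : (volume.restrict W) {x | ¬ u x = φ x} = 0 := ae_iff.mp huW
    rw [Measure.volume_eq_prod, ← Measure.prod_restrict, ae_iff]
    have hset : {p : EuclideanSpace ℝ (Fin n) × EuclideanSpace ℝ (Fin n) | ¬ u p.2 = φ p.2}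
        = (Set.univ ×ˢ {x | ¬ u x = φ x}) := by
      ext p; simp [Set.mem_prod]
    rw [hset, Measure.prod_prod, hB, mul_zero]
  have hprodae1 : ∀ (W : Set (EuclideanSpace ℝ (Fin n))), MeasurableSet W → W ⊆ Ωᶜ →
      ∀ᵐ p ∂(volume.restrict (W ×ˢ Ω)), u p.1 = φ p.1 := by
    intro W mW hWsub
    have huW : ∀ᵐ x ∂(volume.restrict W), u x = φ x :=
      ae_restrict_of_ae_restrict_of_subset hWsub hu
    have hB : (volume.restrict W) {x | ¬ u x = φ x} = 0 := ae_iff.mp huW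
    rw [Measure.volume_eq_prod, ← Measure.prod_restrict, ae_iff]
    have hset : {p : EuclideanSpace ℝ (Fin n) × EuclideanSpace ℝ (Fin n) | ¬ u p.1 = φ p.1}
        = ({x | ¬ u x = φ x} ×ˢ Set.univ) := by
      ext p; simp [Set.mem_prod]
    rw [hset, Measure.prod_prod, hB, zero_mul]
  -- the two auxiliary integrands
  set g₁ : EuclideanSpace ℝ (Fin n) × EuclideanSpace ℝ (Fin n) → ℝ :=
    fun p => |u p.1| * fracKernel n s p.1 p.2 with hg₁def
  set g₂ : EuclideanSpace ℝ (Fin n) × EuclideanSpace ℝ (Fin n) → ℝ :=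
    fun p => |u p.2| * fracKernel n s p.1 p.2 with hg₂def
  have hg₁m : Measurable g₁ := (hum.comp measurable_fst).abs.mul (fk_meas n s)
  have hg₂m : Measurable g₂ := (hum.comp measurable_snd).abs.mul (fk_meas n s)
  have hg₁nn : ∀ p, 0 ≤ g₁ p := fun p => mul_nonneg (abs_nonneg _) (fk_nonneg n s p.1 p.2)
  have hg₂nn : ∀ p, 0 ≤ g₂ p := fun p => mul_nonneg (abs_nonneg _) (fk_nonneg n s p.1 p.2)
  -- a.e. identity on Ω ×ˢ T
  have hW₁ : ∀ᵐ p ∂(volume.restrict (Ω ×ˢ T)), F p = g₁ p := by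
    filter_upwards [hprodae2 T mT Set.diff_subset, ae_restrict_mem (mΩ.prod mT)]
      with p hp1 hp2
    have hφ0' : φ p.2 = 0 := image_eq_zero_of_notMem_tsupport hp2.2.2
    have hv1 : v p.1 = 0 := if_pos hp2.1
    have hv2 : v p.2 = u p.2 := if_neg hp2.2.1
    simp only [hFdef, hg₁def, hv1, hv2, hp1, hφ0', sub_zero, zero_sub, abs_neg, abs_zero]
  have hint₁ : IntegrableOn g₁ (Ω ×ˢ T) volume := hIΩT.congr_fun_ae hW₁
  set a : ℝ := ∫ p in Ω ×ˢ T, g₁ p with hadef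
  have haF : ∫ p in Ω ×ˢ T, F p = a := integral_congr_ae hW₁
  -- a.e. identity on T ×ˢ Ω
  have hW₃ : ∀ᵐ p ∂(volume.restrict (T ×ˢ Ω)), F p = g₂ p := by
    filter_upwards [hprodae1 T mT Set.diff_subset, ae_restrict_mem (mT.prod mΩ)]
      with p hp1 hp2
    have hφ0' : φ p.1 = 0 := image_eq_zero_of_notMem_tsupport hp2.1.2
    have hv1 : v p.1 = u p.1 := if_neg hp2.1.1
    have hv2 : v p.2 = 0 := if_pos hp2.2
    simp only [hFdef, hg₂def, hv1, hv2, hp1, hφ0', sub_zero, zero_sub, abs_neg, abs_zero]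
  have hint₃ : IntegrableOn g₂ (T ×ˢ Ω) volume := hITΩ.congr_fun_ae hW₃
  set a' : ℝ := ∫ p in T ×ˢ Ω, g₂ p with ha'def
  have ha'F : ∫ p in T ×ˢ Ω, F p = a' := integral_congr_ae hW₃
  -- bounds on Ω ×ˢ S
  have hdistS : ∀ x y : EuclideanSpace ℝ (Fin n), x ∈ Ω → y ∈ S → δ ≤ dist x y := by
    intro x y h1 h2
    calc δ ≤ Metric.infDist y Ω := hSΩ y h2
      _ ≤ dist y x := Metric.infDist_le_dist_of_mem h1
      _ = dist x y := dist_comm y x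
  have hW₂ : ∀ᵐ p ∂(volume.restrict (Ω ×ˢ S)),
      -(g₁ p) ≤ F p ∧ g₁ p ≤ F p + 2 * (φ p.2 * fracKernel n s p.1 p.2) := by
    filter_upwards [hprodae2 S mS hSsubΩc, ae_restrict_mem (mΩ.prod mS)] with p hp1 hp2
    have hv1 : v p.1 = 0 := if_pos hp2.1
    have hv2 : v p.2 = u p.2 := if_neg (hSsubΩc hp2.2)
    have hk := fk_nonneg n s p.1 p.2
    have hφnn := hφ0 p.2
    have hFp : F p = (|u p.1 - φ p.2| - φ p.2) * fracKernel n s p.1 p.2 := by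
      simp only [hFdef, hv1, hv2, hp1, zero_sub, abs_neg, abs_of_nonneg hφnn]
    constructor
    · have h1 : -|u p.1| ≤ |u p.1 - φ p.2| - φ p.2 := by
        have h2 := abs_sub_abs_le_abs_sub (φ p.2) (u p.1)
        have h3 : |φ p.2 - u p.1| = |u p.1 - φ p.2| := abs_sub_comm _ _
        rw [h3, abs_of_nonneg hφnn] at h2
        linarith
      rw [hFp]
      simp only [hg₁def]
      calc -(|u p.1| * fracKernel n s p.1 p.2) = (-|u p.1|) * fracKernel n s p.1 p.2 := by ring
        _ ≤ (|u p.1 - φ p.2| - φ p.2) * fracKernel n s p.1 p.2 :=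
            mul_le_mul_of_nonneg_right h1 hk
    · have h1 : |u p.1| - 2 * φ p.2 ≤ |u p.1 - φ p.2| - φ p.2 := by
        have h2 := abs_sub_abs_le_abs_sub (u p.1) (φ p.2)
        rw [abs_of_nonneg hφnn] at h2
        linarith
      rw [hFp]
      simp only [hg₁def]
      have h3 : (|u p.1| - 2 * φ p.2) * fracKernel n s p.1 p.2
          ≤ (|u p.1 - φ p.2| - φ p.2) * fracKernel n s p.1 p.2 :=
        mul_le_mul_of_nonneg_right h1 hk
      nlinarith [h3]
  have hW₄ : ∀ᵐ p ∂(volume.restrict (S ×ˢ Ω)),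
      -(g₂ p) ≤ F p ∧ g₂ p ≤ F p + 2 * (φ p.1 * fracKernel n s p.1 p.2) := by
    filter_upwards [hprodae1 S mS hSsubΩc, ae_restrict_mem (mS.prod mΩ)] with p hp1 hp2
    have hv1 : v p.1 = u p.1 := if_neg (hSsubΩc hp2.1)
    have hv2 : v p.2 = 0 := if_pos hp2.2
    have hk := fk_nonneg n s p.1 p.2
    have hφnn := hφ0 p.1
    have hFp : F p = (|φ p.1 - u p.2| - φ p.1) * fracKernel n s p.1 p.2 := by
      simp only [hFdef, hv1, hv2, hp1, sub_zero, abs_of_nonneg hφnn]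
    constructor
    · have h1 : -|u p.2| ≤ |φ p.1 - u p.2| - φ p.1 := by
        have h2 := abs_sub_abs_le_abs_sub (φ p.1) (u p.2)
        rw [abs_of_nonneg hφnn] at h2
        have h4 := abs_sub_comm (φ p.1) (u p.2)
        linarith [abs_sub_abs_le_abs_sub (φ p.1) (u p.2)]
      rw [hFp]
      simp only [hg₂def]
      calc -(|u p.2| * fracKernel n s p.1 p.2) = (-|u p.2|) * fracKernel n s p.1 p.2 := by ring
        _ ≤ (|φ p.1 - u p.2| - φ p.1) * fracKernel n s p.1 p.2 :=
            mul_le_mul_of_nonneg_right h1 hk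
    · have h1 : |u p.2| - 2 * φ p.1 ≤ |φ p.1 - u p.2| - φ p.1 := by
        have h2 := abs_sub_abs_le_abs_sub (u p.2) (φ p.1)
        rw [abs_of_nonneg hφnn, abs_sub_comm (u p.2) (φ p.1)] at h2
        linarith
      rw [hFp]
      simp only [hg₂def]
      have h3 : (|u p.2| - 2 * φ p.1) * fracKernel n s p.1 p.2
          ≤ (|φ p.1 - u p.2| - φ p.1) * fracKernel n s p.1 p.2 :=
        mul_le_mul_of_nonneg_right h1 hk
      nlinarith [h3]
  -- integrability of the φ-weighted kernels
  obtain ⟨Cφ, hCφ⟩ := hφs.exists_bound_of_continuous hφc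
  have hCφ0 : 0 ≤ Cφ := le_trans (norm_nonneg _) (hCφ 0)
  have hMδ0 : 0 ≤ Mδ := by rw [hMδdef]; positivity
  have hΩSfin : volume (Ω ×ˢ S) ≠ ⊤ := by
    rw [Measure.volume_eq_prod, Measure.prod_prod]
    exact ENNReal.mul_ne_top hΩb.measure_lt_top.ne hScomp.measure_lt_top.ne
  have hSΩfin : volume (S ×ˢ Ω) ≠ ⊤ := by
    rw [Measure.volume_eq_prod, Measure.prod_prod]
    exact ENNReal.mul_ne_top hScomp.measure_lt_top.ne hΩb.measure_lt_top.ne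
  have hGint : IntegrableOn (fun p => φ p.2 * fracKernel n s p.1 p.2) (Ω ×ˢ S) volume := by
    apply Measure.integrableOn_of_bounded hΩSfin
      (((hφm.comp measurable_snd).mul (fk_meas n s)).aestronglyMeasurable) (M := Cφ * Mδ)
    filter_upwards [ae_restrict_mem (mΩ.prod mS)] with p hp
    have hk1 : fracKernel n s p.1 p.2 ≤ Mδ := fk_le n hs0 hs1 hδ (hdistS p.1 p.2 hp.1 hp.2)
    have hφb : |φ p.2| ≤ Cφ := by have h := hCφ p.2; rwa [Real.norm_eq_abs] at h
    rw [Real.norm_eq_abs, Pi.mul_apply, Function.comp_apply, abs_mul, abs_of_nonneg (fk_nonneg n s p.1 p.2)]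
    exact mul_le_mul hφb hk1 (fk_nonneg n s p.1 p.2) hCφ0
  have hGint' : IntegrableOn (fun p => φ p.1 * fracKernel n s p.1 p.2) (S ×ˢ Ω) volume := by
    apply Measure.integrableOn_of_bounded hSΩfin
      (((hφm.comp measurable_fst).mul (fk_meas n s)).aestronglyMeasurable) (M := Cφ * Mδ)
    filter_upwards [ae_restrict_mem (mS.prod mΩ)] with p hp
    have hd : δ ≤ dist p.1 p.2 := by
      rw [dist_comm]; exact hdistS p.2 p.1 hp.2 hp.1
    have hk1 : fracKernel n s p.1 p.2 ≤ Mδ := fk_le n hs0 hs1 hδ hd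
    have hφb : |φ p.1| ≤ Cφ := by have h := hCφ p.1; rwa [Real.norm_eq_abs] at h
    rw [Real.norm_eq_abs, Pi.mul_apply, Function.comp_apply, abs_mul, abs_of_nonneg (fk_nonneg n s p.1 p.2)]
    exact mul_le_mul hφb hk1 (fk_nonneg n s p.1 p.2) hCφ0
  have hint₂ : IntegrableOn g₁ (Ω ×ˢ S) volume := by
    apply Integrable.mono' (hIΩS.add (hGint.const_mul 2)) (hg₁m.aestronglyMeasurable)
    filter_upwards [hW₂] with p hp
    rw [Real.norm_eq_abs, abs_of_nonneg (hg₁nn p)]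
    exact hp.2
  have hint₄ : IntegrableOn g₂ (S ×ˢ Ω) volume := by
    apply Integrable.mono' (hISΩ.add (hGint'.const_mul 2)) (hg₂m.aestronglyMeasurable)
    filter_upwards [hW₄] with p hp
    rw [Real.norm_eq_abs, abs_of_nonneg (hg₂nn p)]
    exact hp.2
  set b : ℝ := ∫ p in Ω ×ˢ S, g₁ p with hbdef
  set b' : ℝ := ∫ p in S ×ˢ Ω, g₂ p with hb'def
  have hbF : -b ≤ ∫ p in Ω ×ˢ S, F p := by
    have h1 : ∫ p in Ω ×ˢ S, -(g₁ p) ≤ ∫ p in Ω ×ˢ S, F p :=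
      integral_mono_ae hint₂.neg hIΩS
        (by filter_upwards [hW₂] with p hp; exact hp.1)
    rwa [integral_neg] at h1
  have hb'F : -b' ≤ ∫ p in S ×ˢ Ω, F p := by
    have h1 : ∫ p in S ×ˢ Ω, -(g₂ p) ≤ ∫ p in S ×ˢ Ω, F p :=
      integral_mono_ae hint₄.neg hISΩ
        (by filter_upwards [hW₄] with p hp; exact hp.1)
    rwa [integral_neg] at h1
  -- nonnegativity on Ω ×ˢ Ω
  have hI0 : 0 ≤ ∫ p in Ω ×ˢ Ω, F p := by
    apply setIntegral_nonneg (mΩ.prod mΩ)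
    intro p hp
    have hv1 : v p.1 = 0 := if_pos hp.1
    have hv2 : v p.2 = 0 := if_pos hp.2
    simp only [hFdef, hv1, hv2, sub_zero, abs_zero, sub_self]
    exact mul_nonneg (by simp [abs_nonneg]) (fk_nonneg n s p.1 p.2)
  -- splitting the crossQ integral
  have d1 : Disjoint (Ω ×ˢ Ω) ((Ω ×ˢ Ωᶜ) ∪ (Ωᶜ ×ˢ Ω)) := by
    rw [Set.disjoint_left]
    rintro p ⟨h1, h2⟩ (⟨_, h4⟩ | ⟨h3, _⟩)
    exacts [h4 h2, h3 h1]
  have d2 : Disjoint ((Ω : Set (EuclideanSpace ℝ (Fin n))) ×ˢ Ωᶜ) (Ωᶜ ×ˢ Ω) := by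
    rw [Set.disjoint_left]
    rintro p ⟨h1, _⟩ ⟨h3, _⟩
    exact h3 h1
  have d3 : Disjoint ((Ω : Set (EuclideanSpace ℝ (Fin n))) ×ˢ T) (Ω ×ˢ S) := by
    rw [Set.disjoint_left]
    rintro p ⟨_, h2⟩ ⟨_, h4⟩
    exact h2.2 h4
  have d4 : Disjoint (T ×ˢ (Ω : Set (EuclideanSpace ℝ (Fin n)))) (S ×ˢ Ω) := by
    rw [Set.disjoint_left]
    rintro p ⟨h1, _⟩ ⟨h3, _⟩
    exact h1.2 h3
  have e1 : (Ω : Set (EuclideanSpace ℝ (Fin n))) ×ˢ Ωᶜ = (Ω ×ˢ T) ∪ (Ω ×ˢ S) := by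
    rw [← hTS, Set.prod_union]
  have e2 : (Ωᶜ : Set (EuclideanSpace ℝ (Fin n))) ×ˢ Ω = (T ×ˢ Ω) ∪ (S ×ˢ Ω) := by
    rw [← hTS, Set.union_prod]
  have hQsplit : crossQ n Ω = (Ω ×ˢ Ω) ∪ ((Ω ×ˢ Ωᶜ) ∪ (Ωᶜ ×ˢ Ω)) := by
    ext p
    rw [hmemQ]
    simp only [Set.mem_union, Set.mem_prod, Set.mem_compl_iff]
    constructor
    · rintro (h1 | h2)
      · by_cases h2 : p.2 ∈ Ω
        · exact Or.inl ⟨h1, h2⟩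
        · exact Or.inr (Or.inl ⟨h1, h2⟩)
      · by_cases h1 : p.1 ∈ Ω
        · exact Or.inl ⟨h1, h2⟩
        · exact Or.inr (Or.inr ⟨h1, h2⟩)
    · rintro (⟨h1, _⟩ | (⟨h1, _⟩ | ⟨_, h2⟩))
      exacts [Or.inl h1, Or.inl h1, Or.inr h2]
  have hIΩc : IntegrableOn F (Ω ×ˢ Ωᶜ) volume := by rw [e1]; exact hIΩT.union hIΩS
  have hIcΩ : IntegrableOn F (Ωᶜ ×ˢ Ω) volume := by rw [e2]; exact hITΩ.union hISΩ
  have hkey : a + a' ≤ b + b' := by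
    rw [hQsplit,
      setIntegral_union d1 ((mΩ.prod mΩ.compl).union (mΩ.compl.prod mΩ)) hIΩΩ
        (hIΩc.union hIcΩ),
      setIntegral_union d2 (mΩ.compl.prod mΩ) hIΩc hIcΩ, e1, e2,
      setIntegral_union d3 (mΩ.prod mS) hIΩT hIΩS,
      setIntegral_union d4 (mS.prod mΩ) hITΩ hISΩ, haF, ha'F] at hFle
    linarith [hbF, hb'F, hI0]
  -- a, a', b, b' are nonnegative
  have ha0 : 0 ≤ a := setIntegral_nonneg (mΩ.prod mT) fun p _ => hg₁nn p
  have ha'0 : 0 ≤ a' := setIntegral_nonneg (mT.prod mΩ) fun p _ => hg₂nn p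
  have hb0 : 0 ≤ b := setIntegral_nonneg (mΩ.prod mS) fun p _ => hg₁nn p
  have hb'0 : 0 ≤ b' := setIntegral_nonneg (mS.prod mΩ) fun p _ => hg₂nn p
  -- Tonelli
  set KT : EuclideanSpace ℝ (Fin n) → ℝ≥0∞ :=
    fun x => ∫⁻ y in T, ENNReal.ofReal (fracKernel n s x y) with hKTdef
  set KS : EuclideanSpace ℝ (Fin n) → ℝ≥0∞ :=
    fun x => ∫⁻ y in S, ENNReal.ofReal (fracKernel n s x y) with hKSdef
  set m : ℝ≥0∞ := ∫⁻ x in Ω, ENNReal.ofReal |u x| with hmdef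
  have tonelli1 : ∀ (W : Set (EuclideanSpace ℝ (Fin n))), MeasurableSet W →
      ∫⁻ p in Ω ×ˢ W, ENNReal.ofReal (g₁ p)
        = ∫⁻ x in Ω, ENNReal.ofReal |u x|
            * (∫⁻ y in W, ENNReal.ofReal (fracKernel n s x y)) := by
    intro W mW
    rw [Measure.volume_eq_prod, ← Measure.prod_restrict,
      lintegral_prod _ (hg₁m.ennreal_ofReal).aemeasurable]
    apply lintegral_congr fun x => ?_
    simp only [hg₁def]
    simp_rw [ENNReal.ofReal_mul (abs_nonneg _)]
    rw [lintegral_const_mul _ (fk_meas_right n s x).ennreal_ofReal]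
  have tonelli2 : ∀ (W : Set (EuclideanSpace ℝ (Fin n))), MeasurableSet W →
      ∫⁻ p in W ×ˢ Ω, ENNReal.ofReal (g₂ p)
        = ∫⁻ x in Ω, ENNReal.ofReal |u x|
            * (∫⁻ y in W, ENNReal.ofReal (fracKernel n s x y)) := by
    intro W mW
    rw [Measure.volume_eq_prod, ← Measure.prod_restrict,
      lintegral_prod_symm _ (hg₂m.ennreal_ofReal).aemeasurable]
    apply lintegral_congr fun y => ?_
    simp only [hg₂def]
    simp_rw [ENNReal.ofReal_mul (abs_nonneg _)]
    rw [lintegral_const_mul _ (fk_meas_left n s y).ennreal_ofReal]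
    congr 1
    apply lintegral_congr fun x => ?_
    rw [fk_symm]
  have hofa : ENNReal.ofReal a = ∫⁻ x in Ω, ENNReal.ofReal |u x| * KT x := by
    rw [hadef, ofReal_integral_eq_lintegral_ofReal hint₁
      (Filter.Eventually.of_forall fun p => hg₁nn p), tonelli1 T mT]
  have hofa' : ENNReal.ofReal a' = ∫⁻ x in Ω, ENNReal.ofReal |u x| * KT x := by
    rw [ha'def, ofReal_integral_eq_lintegral_ofReal hint₃
      (Filter.Eventually.of_forall fun p => hg₂nn p), tonelli2 T mT]
  have hofb : ENNReal.ofReal b = ∫⁻ x in Ω, ENNReal.ofReal |u x| * KS x := by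
    rw [hbdef, ofReal_integral_eq_lintegral_ofReal hint₂
      (Filter.Eventually.of_forall fun p => hg₁nn p), tonelli1 S mS]
  have hofb' : ENNReal.ofReal b' = ∫⁻ x in Ω, ENNReal.ofReal |u x| * KS x := by
    rw [hb'def, ofReal_integral_eq_lintegral_ofReal hint₄
      (Filter.Eventually.of_forall fun p => hg₂nn p), tonelli2 S mS]
  -- kernel mass bounds
  have hKTlow : ∀ x ∈ Ω, (N : ℝ≥0∞) * c₂ ≤ KT x := by
    intro x hx
    have hxball := hΩball hx
    rw [Metric.mem_ball] at hxball
    have hsub2 : {y : EuclideanSpace ℝ (Fin n) | R₂ ≤ dist x y} ⊆ T := by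
      intro y hy
      have hy' : R₂ ≤ dist x y := hy
      have htri := dist_triangle x 0 y
      have hyfar : R₁ ≤ dist y 0 := by
        rw [dist_comm y 0]
        have := dist_comm x (0 : EuclideanSpace ℝ (Fin n))
        nlinarith [dist_triangle x (0 : EuclideanSpace ℝ (Fin n)) y]
      constructor
      · intro hyΩ
        have h := hΩball hyΩ
        rw [Metric.mem_ball] at h
        linarith
      · intro hyS
        have h := hSball hyS
        rw [Metric.mem_ball] at h
        linarith
    calc (N : ℝ≥0∞) * c₂
        ≤ ∫⁻ y in {y | R₂ ≤ dist x y}, ENNReal.ofReal (fracKernel n s x y) :=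
          annuli_lower n hn N hs0 hsN hR₂pos x
      _ ≤ KT x := lintegral_mono_set hsub2
  have hKShigh : ∀ x ∈ Ω, KS x ≤ γstar := by
    intro x hx
    calc KS x ≤ ∫⁻ _y in S, ENNReal.ofReal Mδ := by
          apply lintegral_mono_ae
          filter_upwards [ae_restrict_mem mS] with y hy
          exact ENNReal.ofReal_le_ofReal (fk_le n hs0 hs1 hδ (hdistS x y hx hy))
      _ = ENNReal.ofReal Mδ * volume S := setLIntegral_const _ _
      _ = γstar := hγdef.symm
  have hmum : Measurable fun x => ENNReal.ofReal |u x| := hum.abs.ennreal_ofReal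
  have hPlow : m * ((N : ℝ≥0∞) * c₂) ≤ ∫⁻ x in Ω, ENNReal.ofReal |u x| * KT x := by
    calc m * ((N : ℝ≥0∞) * c₂)
        = ∫⁻ x in Ω, ENNReal.ofReal |u x| * ((N : ℝ≥0∞) * c₂) := by
          rw [lintegral_mul_const _ hmum]
      _ ≤ ∫⁻ x in Ω, ENNReal.ofReal |u x| * KT x := by
          apply lintegral_mono_ae
          filter_upwards [ae_restrict_mem mΩ] with x hx
          exact mul_le_mul_right (hKTlow x hx) _
  have hPhigh : ∫⁻ x in Ω, ENNReal.ofReal |u x| * KS x ≤ m * γstar := by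
    calc ∫⁻ x in Ω, ENNReal.ofReal |u x| * KS x
        ≤ ∫⁻ x in Ω, ENNReal.ofReal |u x| * γstar := by
          apply lintegral_mono_ae
          filter_upwards [ae_restrict_mem mΩ] with x hx
          exact mul_le_mul_right (hKShigh x hx) _
      _ = m * γstar := by rw [lintegral_mul_const _ hmum]
  -- combine
  have hPP : 2 * (∫⁻ x in Ω, ENNReal.ofReal |u x| * KT x)
      ≤ 2 * (∫⁻ x in Ω, ENNReal.ofReal |u x| * KS x) := by
    calc 2 * (∫⁻ x in Ω, ENNReal.ofReal |u x| * KT x)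
        = ENNReal.ofReal a + ENNReal.ofReal a' := by rw [hofa, hofa', two_mul]
      _ = ENNReal.ofReal (a + a') := (ENNReal.ofReal_add ha0 ha'0).symm
      _ ≤ ENNReal.ofReal (b + b') := ENNReal.ofReal_le_ofReal hkey
      _ = ENNReal.ofReal b + ENNReal.ofReal b' := ENNReal.ofReal_add hb0 hb'0
      _ = 2 * (∫⁻ x in Ω, ENNReal.ofReal |u x| * KS x) := by rw [hofb, hofb', two_mul]
  have hPQ : (∫⁻ x in Ω, ENNReal.ofReal |u x| * KT x)
      ≤ ∫⁻ x in Ω, ENNReal.ofReal |u x| * KS x :=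
    (ENNReal.mul_le_mul_iff_right (by norm_num) (by norm_num)).mp hPP
  have hPfin : (∫⁻ x in Ω, ENNReal.ofReal |u x| * KT x) ≠ ⊤ := by
    rw [← hofa]; exact ENNReal.ofReal_ne_top
  have hmfin : m ≠ ⊤ := by
    intro hmtop
    have hNc₂0 : ((N : ℝ≥0∞) * c₂) ≠ 0 :=
      mul_ne_zero (Nat.cast_ne_zero.mpr hN0) hc₂0
    have h1 : m * ((N : ℝ≥0∞) * c₂) = ⊤ := by
      rw [hmtop]; exact ENNReal.top_mul hNc₂0
    exact hPfin (top_le_iff.mp (h1 ▸ hPlow))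
  have hm0 : m = 0 := by
    by_contra hm0
    have hlt : m * γstar < m * ((N : ℝ≥0∞) * c₂) :=
      (ENNReal.mul_lt_mul_iff_right hm0 hmfin).mpr hγN
    have hle : m * ((N : ℝ≥0∞) * c₂) ≤ m * γstar :=
      le_trans hPlow (le_trans hPQ hPhigh)
    exact absurd hle (not_le.mpr hlt)
  have hae : ∀ᵐ x ∂(volume.restrict Ω), ENNReal.ofReal |u x| = 0 := by
    rw [hmdef] at hm0
    exact (lintegral_eq_zero_iff hmum).mp hm0
  filter_upwards [hae] with x hx
  rw [ENNReal.ofReal_eq_zero] at hx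
  have h1 := abs_nonneg (u x)
  exact abs_eq_zero.mp (le_antisymm hx h1)

end
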